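/- Let a₀ > 0, c₀ ∈ ℝ, and m(p) = 1/(e^{a₀|p|²+c₀}+1) for p ∈ ℝ³. Then ∫_{ℝ³} |p|² (m − m²) dp = (3/(2a₀)) · ∫_{ℝ³} m dp. -/

import Mathlib

open Real MeasureTheory
open Set Filter Topology

variable {a c : ℝ}

noncomputable def gg (a c r : ℝ) : ℝ := 1 / (exp (a * r ^ 2 + c) + 1)

lemma gg_pos (a c r : ℝ) : 0 < gg a c r :=
  div_pos one_pos (by positivity)

lemma gg_le_one (a c r : ℝ) : gg a c r ≤ 1 := by
  rw [gg, div_le_one (by positivity)]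
  nlinarith [exp_pos (a * r ^ 2 + c)]

lemma gg_le_exp (a c r : ℝ) : gg a c r ≤ exp (-c) * exp (-(a * r ^ 2)) := by
  rw [gg, ← exp_add]
  have h : -c + -(a * r ^ 2) = -(a * r ^ 2 + c) := by ring
  rw [h, exp_neg, one_div]
  apply inv_anti₀ (exp_pos _) (by linarith)

lemma gg_cont : Continuous (gg a c) := by
  apply Continuous.div continuous_const
  · fun_prop
  · intro r; positivity

lemma gg_hasDeriv (ha : 0 < a) (r : ℝ) :
    HasDerivAt (gg a c) (-(2 * a) * r * (gg a c r - gg a c r ^ 2)) r := by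
  have hu : HasDerivAt (fun r : ℝ => exp (a * r ^ 2 + c) + 1)
      (exp (a * r ^ 2 + c) * (2 * a * r)) r := by
    have : HasDerivAt (fun r : ℝ => a * r ^ 2 + c) (2 * a * r) r := by
      have := ((hasDerivAt_pow 2 r).const_mul a).add_const c
      exact this.congr_deriv (by norm_num; ring)
    exact ((this.exp).add_const 1)
  have hne : exp (a * r ^ 2 + c) + 1 ≠ 0 := by positivity
  have h2 : gg a c r - gg a c r ^ 2 = exp (a * r ^ 2 + c) / (exp (a * r ^ 2 + c) + 1) ^ 2 := by
    rw [gg]; field_simp; ring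
  rw [show (-(2*a)*r*(gg a c r - gg a c r ^ 2))
      = -(exp (a * r ^ 2 + c) * (2 * a * r)) / (exp (a * r ^ 2 + c) + 1) ^ 2 from by
    rw [h2]; ring]
  have hfun : gg a c = fun y => (exp (a * y ^ 2 + c) + 1)⁻¹ := by
    funext y; simp [gg]
  rw [hfun]
  exact hu.inv hne

lemma integrableOn_pow_gg (ha : 0 < a) (n : ℕ) :
    IntegrableOn (fun r => r ^ n * gg a c r) (Ioi (0:ℝ)) := by
  apply Integrable.mono' (((integrableOn_rpow_mul_exp_neg_mul_sq ha
      (s := (n:ℝ)) (neg_one_lt_zero.trans_le (Nat.cast_nonneg n))).const_mul (exp (-c))))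
  · exact ((continuous_pow n).mul gg_cont).aestronglyMeasurable
  · filter_upwards [ae_restrict_mem measurableSet_Ioi] with r hr
    have hr' : (0:ℝ) < r := hr
    rw [Real.norm_eq_abs, abs_of_nonneg (mul_nonneg (pow_nonneg hr'.le n) (gg_pos a c r).le)]
    have := gg_le_exp a c r
    rw [rpow_natCast]
    calc r ^ n * gg a c r ≤ r ^ n * (exp (-c) * exp (-(a * r^2))) := by
          apply mul_le_mul_of_nonneg_left _ (by positivity)
          exact gg_le_exp a c r
      _ = exp (-c) * (r ^ n * exp (-a * r ^ 2)) := by rw [neg_mul]; ring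

lemma integrableOn_pow_gg_sub (ha : 0 < a) :
    IntegrableOn (fun r => r ^ 4 * (gg a c r - gg a c r ^ 2)) (Ioi (0:ℝ)) := by
  apply Integrable.mono' (integrableOn_pow_gg ha 4)
  · exact ((continuous_pow 4).mul (gg_cont.sub (gg_cont.pow 2))).aestronglyMeasurable
  · filter_upwards [ae_restrict_mem measurableSet_Ioi] with r hr
    have hr' : (0:ℝ) < r := hr
    have h1 : 0 ≤ gg a c r - gg a c r ^ 2 := by
      nlinarith [gg_pos a c r, gg_le_one a c r]
    have h2 : gg a c r - gg a c r ^ 2 ≤ gg a c r := by nlinarith [gg_pos a c r]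
    rw [Real.norm_eq_abs, abs_of_nonneg (mul_nonneg (by positivity) h1)]
    exact mul_le_mul_of_nonneg_left h2 (by positivity)

lemma tendsto_cube_gg (ha : 0 < a) :
    Tendsto (fun r => r ^ 3 * gg a c r) atTop (𝓝 0) := by
  have hb : Tendsto (fun r : ℝ => exp (-c) * (r ^ (3:ℝ) * exp (-a * r ^ 2))) atTop (𝓝 0) := by
    have hd : Tendsto (fun x : ℝ => exp (-(1/2) * x)) atTop (𝓝 0) := by
      have h2 : Tendsto (fun x : ℝ => (1/2) * x) atTop atTop :=
        tendsto_id.const_mul_atTop (by norm_num)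
      simpa [Function.comp_def, neg_mul] using Real.tendsto_exp_neg_atTop_nhds_zero.comp h2
    have := (rpow_mul_exp_neg_mul_sq_isLittleO_exp_neg ha 3).isBigO.trans_tendsto hd
    simpa using this.const_mul (exp (-c))
  apply squeeze_zero' (g := fun r : ℝ => exp (-c) * (r ^ (3:ℝ) * exp (-a * r ^ 2))) _ _ hb
  · filter_upwards [eventually_ge_atTop (0:ℝ)] with r hr
    exact mul_nonneg (by positivity) (gg_pos a c r).le
  · filter_upwards [eventually_ge_atTop (0:ℝ)] with r hr
    rw [show (3:ℝ) = ((3:ℕ):ℝ) by norm_num, rpow_natCast]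
    calc r ^ 3 * gg a c r ≤ r ^ 3 * (exp (-c) * exp (-(a * r ^ 2))) :=
          mul_le_mul_of_nonneg_left (gg_le_exp a c r) (by positivity)
      _ = exp (-c) * (r ^ 3 * exp (-a * r ^ 2)) := by rw [neg_mul]; ring

lemma key1d (ha : 0 < a) (c : ℝ) :
    ∫ r in Ioi (0:ℝ), r ^ 4 * (gg a c r - gg a c r ^ 2) =
      (3 / (2 * a)) * ∫ r in Ioi (0:ℝ), r ^ 2 * gg a c r := by
  set f' : ℝ → ℝ :=
    fun r => 3 * (r ^ 2 * gg a c r) - (2 * a) * (r ^ 4 * (gg a c r - gg a c r ^ 2)) with hf'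
  have hF : ∀ r, HasDerivAt (fun r => r ^ 3 * gg a c r) (f' r) r := by
    intro r
    have := (hasDerivAt_pow 3 r).mul (gg_hasDeriv (c:=c) ha r)
    exact this.congr_deriv (by simp only [hf']; norm_num; ring)
  have hint2 : IntegrableOn (fun r => 3 * (r ^ 2 * gg a c r)) (Ioi (0:ℝ)) :=
    (integrableOn_pow_gg ha 2).const_mul 3
  have hint4 : IntegrableOn (fun r => (2 * a) * (r ^ 4 * (gg a c r - gg a c r ^ 2)))
      (Ioi (0:ℝ)) := (integrableOn_pow_gg_sub ha).const_mul _
  have hf'int : IntegrableOn f' (Ioi (0:ℝ)) := hint2.sub hint4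
  have h0 : ContinuousWithinAt (fun r => r ^ 3 * gg a c r) (Ici (0:ℝ)) 0 :=
    ((continuous_pow 3).mul gg_cont).continuousWithinAt
  have hzero := integral_Ioi_of_hasDerivAt_of_tendsto h0 (fun x _ => hF x) hf'int
    (tendsto_cube_gg ha)
  simp only [ne_eq, OfNat.ofNat_ne_zero, not_false_eq_true, zero_pow, zero_mul, sub_zero] at hzero
  rw [hf'] at hzero
  rw [integral_sub hint2 hint4, integral_const_mul, integral_const_mul] at hzero
  have ha' : (2 * a) ≠ 0 := by positivity
  field_simp
  have e : ∀ r : ℝ, r ^ 4 * gg a c r * (1 - gg a c r) = r ^ 4 * (gg a c r - gg a c r ^ 2) :=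
    fun r => by ring
  simp only [e]
  linarith [hzero]

theorem stmt_17 (a₀ : ℝ) (ha : 0 < a₀) (c₀ : ℝ)
    (m : EuclideanSpace ℝ (Fin 3) → ℝ)
    (hm : ∀ p, m p = 1 / (exp (a₀ * ‖p‖ ^ 2 + c₀) + 1)) :
    ∫ p : EuclideanSpace ℝ (Fin 3), ‖p‖ ^ 2 * (m p - m p ^ 2) =
      (3 / (2 * a₀)) * ∫ p : EuclideanSpace ℝ (Fin 3), m p := by
  have h1 : ∫ p : EuclideanSpace ℝ (Fin 3), ‖p‖ ^ 2 * (m p - m p ^ 2) =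
      ∫ p : EuclideanSpace ℝ (Fin 3),
        (fun r => r ^ 2 * (gg a₀ c₀ r - gg a₀ c₀ r ^ 2)) ‖p‖ := by
    congr 1; funext p; rw [hm p]; simp [gg]
  have h2 : ∫ p : EuclideanSpace ℝ (Fin 3), m p =
      ∫ p : EuclideanSpace ℝ (Fin 3), (fun r => gg a₀ c₀ r) ‖p‖ := by
    congr 1; funext p; rw [hm p]; simp [gg]
  rw [h1, h2,
    integral_fun_norm_addHaar volume (fun r => r ^ 2 * (gg a₀ c₀ r - gg a₀ c₀ r ^ 2)),
    integral_fun_norm_addHaar volume (fun r => gg a₀ c₀ r)]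
  simp only [finrank_euclideanSpace, Fintype.card_fin, smul_eq_mul, nsmul_eq_mul]
  have hcong : ∫ y in Ioi (0:ℝ), y ^ (3 - 1) * (y ^ 2 * (gg a₀ c₀ y - gg a₀ c₀ y ^ 2)) =
      ∫ y in Ioi (0:ℝ), y ^ 4 * (gg a₀ c₀ y - gg a₀ c₀ y ^ 2) := by
    apply setIntegral_congr_fun measurableSet_Ioi
    intro y hy; ring
  rw [hcong, key1d ha c₀]
  ring
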